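/- If a, b, c are integers with gcd(a, b) = 1 and l > 1 is an integer such that (a - b)^4 + a^4 + (a + b)^4 = c^l, then c is not divisible by 2, 3, or 5; in particular a is odd and 3 does not divide b. -/

import Mathlib

theorem stmt_2 (a b c : ℤ) (l : ℕ) (hl : 1 < l) (hab : Int.gcd a b = 1)
    (h : (a - b) ^ 4 + a ^ 4 + (a + b) ^ 4 = c ^ l) :
    ¬ (2 ∣ c) ∧ ¬ (3 ∣ c) ∧ ¬ (5 ∣ c) ∧ Odd a ∧ ¬ ((3 : ℤ) ∣ b) := by
  have hl0 : l ≠ 0 := by omega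
  have sqdvd : ∀ p : ℤ, p ∣ c → p ^ 2 ∣ c ^ l := by
    rintro p ⟨d, hd⟩
    have hcl : c ^ l = c ^ 2 * c ^ (l - 2) := by rw [← pow_add]; congr 1; omega
    rw [hcl, hd]
    exact Dvd.dvd.mul_right ⟨d ^ 2, by ring⟩ _
  -- a is odd
  have hodd : Odd a := by
    rw [← Int.not_even_iff_odd]
    rintro ⟨x, hx⟩
    have hbodd : b % 2 = 1 := by
      rcases Int.even_or_odd b with ⟨t,ht⟩ | ⟨t,ht⟩
      swap
      · omega
      have hb : (2:ℤ) ∣ b := ⟨t, by omega⟩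
      have h2g : (2 : ℤ) ∣ (Int.gcd a b : ℤ) := Int.dvd_coe_gcd ⟨x, by omega⟩ hb
      rw [hab] at h2g; norm_num at h2g
    obtain ⟨y, hy⟩ : Odd b := Int.odd_iff.mpr (by omega)
    obtain ⟨M, key⟩ : ∃ M : ℤ, (a - b) ^ 4 + a ^ 4 + (a + b) ^ 4 = 4 * M + 2 :=
      ⟨12*x^4 + 12*x^2*(2*y+1)^2 + 8*y^4 + 16*y^3 + 12*y^2 + 4*y, by
        subst hy; rw [hx]; ring⟩
    rcases em ((2 : ℤ) ∣ c) with hc | hc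
    · have h4 : (4 : ℤ) ∣ c ^ l := by
        have := sqdvd 2 hc; norm_num at this; exact this
      rw [← h, key] at h4
      omega
    · have h2 : (2 : ℤ) ∣ c ^ l := by rw [← h, key]; omega
      exact hc (Int.prime_two.dvd_of_dvd_pow h2)
  -- 3 does not divide b
  have hb3 : ¬ ((3 : ℤ) ∣ b) := by
    rintro ⟨k, hk⟩
    have ha3 : ¬ (3 : ℤ) ∣ a := by
      intro ha
      rcases em ((3:ℤ) ∣ b) with hb | hb
      · have h3g : (3 : ℤ) ∣ (Int.gcd a b : ℤ) := Int.dvd_coe_gcd ha hb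
        rw [hab] at h3g; norm_num at h3g
      · exact hb ⟨k, hk⟩
    obtain ⟨M, key⟩ : ∃ M : ℤ, (a - b) ^ 4 + a ^ 4 + (a + b) ^ 4 = 9 * M + 3 * a ^ 4 :=
      ⟨12*a^2*k^2 + 18*k^4, by rw [hk]; ring⟩
    rcases em ((3 : ℤ) ∣ c) with hc | hc
    · have h9 : (9 : ℤ) ∣ c ^ l := by
        have := sqdvd 3 hc; norm_num at this; exact this
      rw [← h, key] at h9
      have h3a4 : (3 : ℤ) ∣ a ^ 4 := by
        have hN : (3:ℤ) ∣ a^4 ∨ ¬ (3:ℤ) ∣ a^4 := em _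
        rcases hN with hN | hN
        · exact hN
        · exfalso; revert h9; generalize a ^ 4 = N at hN ⊢; omega
      exact ha3 (Int.prime_three.dvd_of_dvd_pow h3a4)
    · have h3 : (3 : ℤ) ∣ c ^ l := by
        rw [← h, key]; exact ⟨3 * M + a ^ 4, by ring⟩
      exact hc (Int.prime_three.dvd_of_dvd_pow h3)
  -- 3 does not divide c
  have hc3 : ¬ ((3 : ℤ) ∣ c) := by
    intro hc
    have h3 : (3 : ℤ) ∣ c ^ l := dvd_pow hc hl0
    rw [← h] at h3
    obtain ⟨M, key⟩ : ∃ M : ℤ, (a - b) ^ 4 + a ^ 4 + (a + b) ^ 4 = 3 * M + 2 * b ^ 4 :=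
      ⟨a^4 + 4*a^2*b^2, by ring⟩
    rw [key] at h3
    have h3b4 : (3 : ℤ) ∣ b ^ 4 := by
      generalize b ^ 4 = N at h3 ⊢; omega
    exact hb3 (Int.prime_three.dvd_of_dvd_pow h3b4)
  -- 2 does not divide c
  have hc2 : ¬ ((2 : ℤ) ∣ c) := by
    intro hc
    have h2 : (2 : ℤ) ∣ c ^ l := dvd_pow hc hl0
    rw [← h] at h2
    obtain ⟨x, hx⟩ := hodd
    obtain ⟨M, key⟩ : ∃ M : ℤ, (a - b) ^ 4 + a ^ 4 + (a + b) ^ 4 = 2 * M + 1 :=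
      ⟨24*x^4 + 48*x^3 + 36*x^2 + 12*x + 1 + 6*(2*x+1)^2*b^2 + b^4, by rw [hx]; ring⟩
    rw [key] at h2
    omega
  -- 5 does not divide c
  have hc5 : ¬ ((5 : ℤ) ∣ c) := by
    intro hc
    have h5 : (5 : ℤ) ∣ (a - b) ^ 4 + a ^ 4 + (a + b) ^ 4 := by
      rw [h]; exact dvd_pow hc hl0
    have hz : ((a : ZMod 5) - b) ^ 4 + (a : ZMod 5) ^ 4 + ((a : ZMod 5) + b) ^ 4 = 0 := by
      have := (ZMod.intCast_zmod_eq_zero_iff_dvd _ 5).mpr h5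
      push_cast at this
      linear_combination this
    have key : ∀ u v : ZMod 5, (u - v) ^ 4 + u ^ 4 + (u + v) ^ 4 = 0 → u = 0 ∧ v = 0 := by
      decide
    obtain ⟨hu, hv⟩ := key _ _ hz
    have ha : (5 : ℤ) ∣ a := (ZMod.intCast_zmod_eq_zero_iff_dvd _ 5).mp hu
    have hb : (5 : ℤ) ∣ b := (ZMod.intCast_zmod_eq_zero_iff_dvd _ 5).mp hv
    have h5g : (5 : ℤ) ∣ (Int.gcd a b : ℤ) := Int.dvd_coe_gcd ha hb
    rw [hab] at h5g; norm_num at h5g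
  exact ⟨hc2, hc3, hc5, hodd, hb3⟩
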